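/- Let N ≥ 1 be an integer, ε := 1/N, and β : ℤ → ℝ 2N-periodic. Let I := {ℓ ∈ {−N+1,…,N} : 0 < β_{ℓ+j} < 1 for some j ∈ {−2,−1,1,2}} and K := #I, and assume that (D³β)_{ℓ+1} = 0 for every ℓ ∈ {−N+1,…,N} with ℓ ∉ I. Then for every u ∈ U, the term T := Σ_{ℓ=−N+1}^{N} ε³ (D³β)_{ℓ+1} u_ℓ (Du)_{ℓ+1} satisfies |T| ≤ √2 · ε² (Kε)^{1/2} ‖D³β‖_{ℓ∞} ‖Du‖²_{ℓ²_ε}, where ‖D³β‖_{ℓ∞} := max_{−N+1 ≤ ℓ ≤ N} |(D³β)_ℓ|. -/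

import Mathlib

open Finset

noncomputable section

/-- mesh size ε = 1/N -/
def eps (N : ℕ) : ℝ := 1 / N

/-- the periodic cell {-N+1, …, N} -/
def cell (N : ℕ) : Finset ℤ := Finset.Icc (-(N : ℤ) + 1) N

/-- 2N-periodicity -/
def Per (N : ℕ) (u : ℤ → ℝ) : Prop := ∀ ℓ : ℤ, u (ℓ + 2 * N) = u ℓ

/-- zero mean over a period -/
def MeanZero (N : ℕ) (u : ℤ → ℝ) : Prop := ∑ ℓ ∈ cell N, u ℓ = 0

/-- first discrete derivative (Du)_ℓ = (u_ℓ - u_{ℓ-1})/ε -/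
def D (N : ℕ) (u : ℤ → ℝ) (ℓ : ℤ) : ℝ := (u ℓ - u (ℓ - 1)) / eps N

/-- second discrete derivative (D²u)_ℓ = ((Du)_{ℓ+1} - (Du)_ℓ)/ε -/
def D2 (N : ℕ) (u : ℤ → ℝ) (ℓ : ℤ) : ℝ := (D N u (ℓ + 1) - D N u ℓ) / eps N

/-- third discrete derivative (D³u)_ℓ = ((D²u)_ℓ - (D²u)_{ℓ-1})/ε -/
def D3 (N : ℕ) (u : ℤ → ℝ) (ℓ : ℤ) : ℝ := (D2 N u ℓ - D2 N u (ℓ - 1)) / eps N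

/-- the ℓ²_ε inner product ⟨u,w⟩ = ε Σ u_ℓ w_ℓ -/
def ip (N : ℕ) (u w : ℤ → ℝ) : ℝ := ∑ ℓ ∈ cell N, eps N * (u ℓ * w ℓ)

/-- the squared ℓ²_ε norm ‖u‖² = ε Σ |u_ℓ|² -/
def nsq (N : ℕ) (u : ℤ → ℝ) : ℝ := ∑ ℓ ∈ cell N, eps N * |u ℓ| ^ 2

attribute [local instance] Classical.propDecidable

/-- the interface (blending) index set
`I := {ℓ ∈ {−N+1,…,N} : 0 < β_{ℓ+j} < 1 for some j ∈ {−2,−1,1,2}}` -/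
def interf (N : ℕ) (β : ℤ → ℝ) : Finset ℤ :=
  (cell N).filter fun ℓ =>
    ∃ j ∈ ({-2, -1, 1, 2} : Finset ℤ), 0 < β (ℓ + j) ∧ β (ℓ + j) < 1

/-- the error term T -/
def Tterm (N : ℕ) (β u : ℤ → ℝ) : ℝ :=
  ∑ ℓ ∈ cell N, eps N ^ 3 * D3 N β (ℓ + 1) * u ℓ * D N u (ℓ + 1)

/- ## Auxiliary lemmas -/

lemma eps_pos' {N : ℕ} (hN : 1 ≤ N) : 0 < eps N := by
  have h : (0:ℝ) < N := by exact_mod_cast Nat.lt_of_lt_of_le Nat.zero_lt_one hN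
  exact div_pos one_pos h

lemma per_iter' {N : ℕ} {u : ℤ → ℝ} (h : Per N u) (ℓ : ℤ) (k : ℤ) :
    u (ℓ + 2 * N * k) = u ℓ := by
  induction k using Int.induction_on with
  | zero => simp
  | succ n ih =>
      have e : ℓ + 2 * (N:ℤ) * ((n:ℤ) + 1) = (ℓ + 2 * N * n) + 2 * N := by ring
      rw [e, h, ih]
  | pred n ih =>
      have e : (ℓ + 2 * (N:ℤ) * (-(n:ℤ) - 1)) + 2 * N = ℓ + 2 * N * (-(n:ℤ)) := by ring
      have := h (ℓ + 2 * (N:ℤ) * (-(n:ℤ) - 1))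
      rw [e] at this
      rw [← this, ih]

lemma per_D' {N : ℕ} {u : ℤ → ℝ} (h : Per N u) : Per N (D N u) := by
  intro ℓ
  simp only [D]
  rw [h ℓ, show ℓ + 2 * (N:ℤ) - 1 = (ℓ - 1) + 2 * N by ring, h (ℓ - 1)]

lemma per_D2' {N : ℕ} {u : ℤ → ℝ} (h : Per N u) : Per N (D2 N u) := by
  intro ℓ
  simp only [D2]
  rw [show ℓ + 2 * (N:ℤ) + 1 = (ℓ + 1) + 2 * N by ring, per_D' h (ℓ + 1), per_D' h ℓ]

lemma per_D3' {N : ℕ} {u : ℤ → ℝ} (h : Per N u) : Per N (D3 N u) := by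
  intro ℓ
  simp only [D3]
  rw [per_D2' h ℓ, show ℓ + 2 * (N:ℤ) - 1 = (ℓ - 1) + 2 * N by ring, per_D2' h (ℓ - 1)]

lemma exists_rep' {N : ℕ} (hN : 1 ≤ N) (ℓ : ℤ) :
    ∃ m ∈ cell N, ∃ k : ℤ, ℓ = m + 2 * N * k := by
  have hT : (0:ℤ) < 2 * N := by omega
  refine ⟨(ℓ - (-(N:ℤ) + 1)) % (2 * N) + (-(N:ℤ) + 1), ?_, (ℓ - (-(N:ℤ) + 1)) / (2 * N), ?_⟩
  · have h1 := Int.emod_nonneg (ℓ - (-(N:ℤ) + 1)) (ne_of_gt hT)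
    have h2 := Int.emod_lt_of_pos (ℓ - (-(N:ℤ) + 1)) hT
    simp only [cell, Finset.mem_Icc]
    omega
  · have := Int.mul_ediv_add_emod (ℓ - (-(N:ℤ) + 1)) (2 * N)
    linarith

lemma abs_le_sup' {N : ℕ} (hN : 1 ≤ N) (hne : (cell N).Nonempty) {f : ℤ → ℝ}
    (h : Per N f) (ℓ : ℤ) : |f ℓ| ≤ (cell N).sup' hne (fun m => |f m|) := by
  obtain ⟨m, hm, k, rfl⟩ := exists_rep' hN ℓ
  rw [per_iter' h]
  exact Finset.le_sup' (fun m => |f m|) hm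

lemma sum_shift' {N : ℕ} (hN : 1 ≤ N) {g : ℤ → ℝ} (h : Per N g) :
    ∑ ℓ ∈ cell N, g (ℓ + 1) = ∑ ℓ ∈ cell N, g ℓ := by
  have h1 : ∑ ℓ ∈ cell N, g (ℓ + 1) = ∑ ℓ ∈ Finset.Icc (-(N:ℤ) + 2) ((N:ℤ) + 1), g ℓ := by
    have hm : Finset.map (addRightEmbedding 1) (Finset.Icc (-(N:ℤ) + 1) (N:ℤ))
        = Finset.Icc (-(N:ℤ) + 2) ((N:ℤ) + 1) := by
      rw [Finset.map_add_right_Icc]; congr 1 <;> ring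
    rw [← hm]
    simp only [cell, Finset.sum_map, addRightEmbedding_apply]
  have e1 : Finset.Icc (-(N:ℤ) + 2) ((N:ℤ) + 1)
      = insert ((N:ℤ) + 1) (Finset.Icc (-(N:ℤ) + 2) (N:ℤ)) := by
    ext x; simp only [Finset.mem_Icc, Finset.mem_insert]; omega
  have e2 : cell N = insert (-(N:ℤ) + 1) (Finset.Icc (-(N:ℤ) + 2) (N:ℤ)) := by
    ext x; simp only [cell, Finset.mem_Icc, Finset.mem_insert]; omega
  have hmem1 : ((N:ℤ) + 1) ∉ Finset.Icc (-(N:ℤ) + 2) (N:ℤ) := by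
    simp only [Finset.mem_Icc]; omega
  have hmem2 : (-(N:ℤ) + 1) ∉ Finset.Icc (-(N:ℤ) + 2) (N:ℤ) := by
    simp only [Finset.mem_Icc]; omega
  have hval : g ((N:ℤ) + 1) = g (-(N:ℤ) + 1) := by
    have := h (-(N:ℤ) + 1)
    rw [show -(N:ℤ) + 1 + 2 * N = (N:ℤ) + 1 by ring] at this
    exact this
  rw [h1, e1, Finset.sum_insert hmem1, e2, Finset.sum_insert hmem2, hval]

lemma eps_mul_D' {N : ℕ} (hN : 1 ≤ N) (u : ℤ → ℝ) (k : ℤ) :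
    eps N * D N u k = u k - u (k - 1) := by
  have hε : eps N ≠ 0 := (eps_pos' hN).ne'
  rw [D]
  field_simp

lemma telescope' {N : ℕ} (hN : 1 ≤ N) (u : ℤ → ℝ) (m ℓ : ℤ) (h : m ≤ ℓ) :
    u ℓ - u m = ∑ k ∈ Finset.Icc (m + 1) ℓ, eps N * D N u k := by
  refine Int.le_induction
    (motive := fun j _ => u j - u m = ∑ k ∈ Finset.Icc (m + 1) j, eps N * D N u k) ?_ ?_ ℓ h
  · show u m - u m = ∑ k ∈ Finset.Icc (m + 1) m, eps N * D N u k
    rw [show Finset.Icc (m + 1) m = ∅ from Finset.Icc_eq_empty (by omega)]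
    simp
  · intro j hj ih
    rw [show Finset.Icc (m + 1) (j + 1) = insert (j + 1) (Finset.Icc (m + 1) j) by
      ext x; simp only [Finset.mem_Icc, Finset.mem_insert]; omega]
    rw [Finset.sum_insert (by simp only [Finset.mem_Icc]; omega)]
    rw [eps_mul_D' hN, ← ih]
    ring_nf

lemma card_cell' {N : ℕ} : ((cell N).card : ℝ) = 2 * N := by
  have : (cell N).card = 2 * N := by
    simp only [cell, Int.card_Icc]
    omega
  rw [this]; push_cast; ring

/-- discrete Poincaré: sup bound on mean-zero functions -/
lemma usup' {N : ℕ} (hN : 1 ≤ N) {u : ℤ → ℝ} (hmean : MeanZero N u) {ℓ : ℤ}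
    (hℓ : ℓ ∈ cell N) :
    |u ℓ| ^ 2 ≤ 2 * nsq N (D N u) := by
  have hε := eps_pos' hN
  set A := ∑ k ∈ cell N, |D N u k| with hA
  have hA0 : 0 ≤ A := Finset.sum_nonneg fun _ _ => abs_nonneg _
  -- Step A: difference bound
  have claim1 : ∀ m ∈ cell N, |u ℓ - u m| ≤ eps N * A := by
    have key : ∀ a b : ℤ, a ∈ cell N → b ∈ cell N → a ≤ b → |u b - u a| ≤ eps N * A := by
      intro a b ha hb hab
      rw [telescope' hN u a b hab]
      refine (Finset.abs_sum_le_sum_abs _ _).trans ?_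
      have hsub : Finset.Icc (a + 1) b ⊆ cell N := by
        intro x hx
        simp only [Finset.mem_Icc] at hx
        simp only [cell, Finset.mem_Icc] at ha hb ⊢
        omega
      calc ∑ k ∈ Finset.Icc (a + 1) b, |eps N * D N u k|
          = ∑ k ∈ Finset.Icc (a + 1) b, eps N * |D N u k| := by
            refine Finset.sum_congr rfl fun k _ => ?_
            rw [abs_mul, abs_of_pos hε]
        _ ≤ ∑ k ∈ cell N, eps N * |D N u k| := by
            refine Finset.sum_le_sum_of_subset_of_nonneg hsub fun k _ _ => ?_
            positivity
        _ = eps N * A := by rw [hA, Finset.mul_sum]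
    intro m hm
    rcases le_total m ℓ with h' | h'
    · exact key m ℓ hm hℓ h'
    · rw [abs_sub_comm]; exact key ℓ m hℓ hm h'
  -- Step B: (ε A)² ≤ 2 nsq
  have claim2 : (eps N * A) ^ 2 ≤ 2 * nsq N (D N u) := by
    have cs := Finset.sum_mul_sq_le_sq_mul_sq (cell N) (fun _ => (1:ℝ))
      (fun k => |D N u k|)
    simp only [one_mul, one_pow] at cs
    have cs' : A ^ 2 ≤ ((cell N).card : ℝ) * ∑ k ∈ cell N, |D N u k| ^ 2 := by
      calc A ^ 2 ≤ (∑ _k ∈ cell N, (1:ℝ)) * ∑ k ∈ cell N, |D N u k| ^ 2 := cs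
        _ = ((cell N).card : ℝ) * ∑ k ∈ cell N, |D N u k| ^ 2 := by
            rw [Finset.sum_const, nsmul_eq_mul, mul_one]
    have hcard : ((cell N).card : ℝ) = 2 * N := card_cell'
    have hnsq : nsq N (D N u) = eps N * ∑ k ∈ cell N, |D N u k| ^ 2 := by
      rw [nsq, Finset.mul_sum]
    have hNε : eps N * (N:ℝ) = 1 := by
      rw [eps]
      field_simp
    have hS0 : 0 ≤ ∑ k ∈ cell N, |D N u k| ^ 2 :=
      Finset.sum_nonneg fun _ _ => sq_nonneg _
    calc (eps N * A) ^ 2 = eps N ^ 2 * A ^ 2 := by ring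
      _ ≤ eps N ^ 2 * (((cell N).card : ℝ) * ∑ k ∈ cell N, |D N u k| ^ 2) := by
          have := mul_le_mul_of_nonneg_left cs' (le_of_lt (pow_pos hε 2))
          exact this
      _ = 2 * (eps N * (N:ℝ)) * (eps N * ∑ k ∈ cell N, |D N u k| ^ 2) := by
          rw [hcard]; ring
      _ = 2 * nsq N (D N u) := by rw [hNε, hnsq]; ring
  -- Step C: sign points
  have hnecell : (cell N).Nonempty := ⟨ℓ, hℓ⟩
  have exneg : ∃ m ∈ cell N, u m ≤ 0 := by
    by_contra hc
    push_neg at hc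
    have : 0 < ∑ m ∈ cell N, u m :=
      Finset.sum_pos (fun m hm => hc m hm) hnecell
    rw [hmean] at this
    exact lt_irrefl 0 this
  have expos : ∃ m ∈ cell N, 0 ≤ u m := by
    by_contra hc
    push_neg at hc
    have : ∑ m ∈ cell N, u m < 0 :=
      Finset.sum_neg (fun m hm => hc m hm) hnecell
    rw [hmean] at this
    exact lt_irrefl 0 this
  -- Step D
  have habs : |u ℓ| ≤ eps N * A := by
    rcases le_or_gt 0 (u ℓ) with hpos | hneg
    · obtain ⟨m, hm, hum⟩ := exneg
      have h1 : |u ℓ| = u ℓ := abs_of_nonneg hpos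
      have h2 : u ℓ ≤ u ℓ - u m := by linarith
      have h3 : u ℓ - u m ≤ |u ℓ - u m| := le_abs_self _
      calc |u ℓ| = u ℓ := h1
        _ ≤ u ℓ - u m := h2
        _ ≤ |u ℓ - u m| := h3
        _ ≤ eps N * A := claim1 m hm
    · obtain ⟨m, hm, hum⟩ := expos
      have h1 : |u ℓ| = -(u ℓ) := abs_of_neg hneg
      have h2 : -(u ℓ) ≤ u m - u ℓ := by linarith
      have h3 : u m - u ℓ ≤ |u ℓ - u m| := by
        rw [abs_sub_comm]; exact le_abs_self _
      calc |u ℓ| = -(u ℓ) := h1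
        _ ≤ u m - u ℓ := h2
        _ ≤ |u ℓ - u m| := h3
        _ ≤ eps N * A := claim1 m hm
  calc |u ℓ| ^ 2 ≤ (eps N * A) ^ 2 := by
        have := mul_nonneg hε.le hA0
        exact pow_le_pow_left₀ (abs_nonneg _) habs 2
    _ ≤ 2 * nsq N (D N u) := claim2

/-- estimate of the error term T:
`|T| ≤ √2 · ε² (Kε)^{1/2} ‖D³β‖_{ℓ∞} ‖Du‖²`, where `K = #I`. -/
theorem stmt_6 (N : ℕ) (hN : 1 ≤ N) (β : ℤ → ℝ) (hβper : Per N β)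
    (hsupp : ∀ ℓ ∈ cell N, ℓ ∉ interf N β → D3 N β (ℓ + 1) = 0)
    (u : ℤ → ℝ) (hper : Per N u) (hmean : MeanZero N u)
    (hne : (cell N).Nonempty) :
    |Tterm N β u|
      ≤ Real.sqrt 2 * eps N ^ 2 * Real.sqrt ((interf N β).card * eps N)
          * (cell N).sup' hne (fun ℓ => |D3 N β ℓ|) * nsq N (D N u) := by
  classical
  have hε := eps_pos' hN
  set ε := eps N with hεdef
  set M := (cell N).sup' hne (fun ℓ => |D3 N β ℓ|) with hMdef
  set S := ∑ k ∈ cell N, |D N u k| ^ 2 with hSdef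
  have hS0 : 0 ≤ S := Finset.sum_nonneg fun _ _ => sq_nonneg _
  have hnsq : nsq N (D N u) = ε * S := by
    rw [nsq, hSdef, Finset.mul_sum]
  obtain ⟨a, ha⟩ := id hne
  have hsubI : interf N β ⊆ cell N := by
    intro x hx
    unfold interf at hx
    exact Finset.mem_of_mem_filter x hx
  have hM0 : 0 ≤ M := le_trans (abs_nonneg (D3 N β a)) (Finset.le_sup' (fun ℓ => |D3 N β ℓ|) ha)
  set K := ((interf N β).card : ℝ) with hKdef
  have hK0 : 0 ≤ K := Nat.cast_nonneg _
  -- restrict the sum to the interface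
  have hT : Tterm N β u = ∑ ℓ ∈ interf N β, ε ^ 3 * D3 N β (ℓ + 1) * u ℓ * D N u (ℓ + 1) := by
    rw [Tterm]
    symm
    apply Finset.sum_subset hsubI
    intro x hx hnx
    rw [hsupp x hx hnx]
    ring
  -- pointwise bound
  have habs : |Tterm N β u|
      ≤ ∑ ℓ ∈ interf N β, ε ^ 3 * M * Real.sqrt (2 * nsq N (D N u)) * |D N u (ℓ + 1)| := by
    rw [hT]
    refine (Finset.abs_sum_le_sum_abs _ _).trans (Finset.sum_le_sum ?_)
    intro ℓ hℓ
    have hℓc : ℓ ∈ cell N := hsubI hℓ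
    have h1 : |D3 N β (ℓ + 1)| ≤ M := abs_le_sup' hN hne (per_D3' hβper) (ℓ + 1)
    have h2 : |u ℓ| ≤ Real.sqrt (2 * nsq N (D N u)) := by
      have h := usup' hN hmean hℓc
      rw [← Real.sqrt_sq_eq_abs]
      exact Real.sqrt_le_sqrt (by rw [← sq_abs]; exact h)
    rw [abs_mul, abs_mul, abs_mul, abs_pow, abs_of_pos hε]
    gcongr
  -- Cauchy–Schwarz on the interface sum
  have hshift : ∑ ℓ ∈ cell N, |D N u (ℓ + 1)| ^ 2 = S := by
    rw [hSdef]
    exact sum_shift' hN (g := fun k => |D N u k| ^ 2)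
      (fun k => by show |D N u (k + 2 * N)| ^ 2 = |D N u k| ^ 2; rw [per_D' hper k])
  have hsub : ∑ ℓ ∈ interf N β, |D N u (ℓ + 1)| ^ 2 ≤ S := by
    rw [← hshift]
    exact Finset.sum_le_sum_of_subset_of_nonneg hsubI (fun _ _ _ => sq_nonneg _)
  have hCS : ∑ ℓ ∈ interf N β, |D N u (ℓ + 1)| ≤ Real.sqrt K * Real.sqrt S := by
    have cs := Finset.sum_mul_sq_le_sq_mul_sq (interf N β) (fun _ => (1:ℝ))
      (fun ℓ => |D N u (ℓ + 1)|)
    simp only [one_mul, one_pow] at cs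
    have cs' : (∑ ℓ ∈ interf N β, |D N u (ℓ + 1)|) ^ 2 ≤ K * S := by
      calc (∑ ℓ ∈ interf N β, |D N u (ℓ + 1)|) ^ 2
          ≤ (∑ _ℓ ∈ interf N β, (1:ℝ)) * ∑ ℓ ∈ interf N β, |D N u (ℓ + 1)| ^ 2 := cs
        _ = K * ∑ ℓ ∈ interf N β, |D N u (ℓ + 1)| ^ 2 := by
            rw [Finset.sum_const, nsmul_eq_mul, mul_one, hKdef]
        _ ≤ K * S := by
            exact mul_le_mul_of_nonneg_left hsub hK0
    have h0 : 0 ≤ ∑ ℓ ∈ interf N β, |D N u (ℓ + 1)| :=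
      Finset.sum_nonneg fun _ _ => abs_nonneg _
    calc ∑ ℓ ∈ interf N β, |D N u (ℓ + 1)|
        = Real.sqrt ((∑ ℓ ∈ interf N β, |D N u (ℓ + 1)|) ^ 2) := (Real.sqrt_sq h0).symm
      _ ≤ Real.sqrt (K * S) := Real.sqrt_le_sqrt cs'
      _ = Real.sqrt K * Real.sqrt S := Real.sqrt_mul hK0 _
  -- combine
  have step : |Tterm N β u| ≤ ε ^ 3 * M * Real.sqrt (2 * (ε * S)) * (Real.sqrt K * Real.sqrt S) := by
    refine habs.trans ?_
    rw [← Finset.mul_sum, ← hnsq]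
    exact mul_le_mul_of_nonneg_left hCS (by positivity)
  refine step.trans (le_of_eq ?_)
  have e1 : Real.sqrt (2 * (ε * S)) = Real.sqrt 2 * (Real.sqrt ε * Real.sqrt S) := by
    rw [Real.sqrt_mul (by norm_num), Real.sqrt_mul hε.le]
  have e2 : Real.sqrt (K * ε) = Real.sqrt K * Real.sqrt ε := Real.sqrt_mul hK0 _
  have e3 : Real.sqrt S * Real.sqrt S = S := Real.mul_self_sqrt hS0
  rw [hnsq, e1, e2]
  linear_combination (ε ^ 3 * M * Real.sqrt 2 * Real.sqrt ε * Real.sqrt K) * e3
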